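/- arXiv:1010.4137 — 2 statements merged into one kernel-verified Lean document; each statement's English description precedes it below -/
import Mathlib

section
/- Let (X_n) be a reversible nearest-neighbour random walk in periodic environment on Z^d with p_x(e) > 0 for all x ∈ Z^d and all unit vectors e (so the induced chain ξ on T is irreducible, with unique stationary distribution π, and ν := Σ_{x∈T} π(x) Σ_{y∈Z^d} p_x(y) y). If the average negative gradient g of the potential is not the zero vector, then ⟨g, ν⟩ > 0. -/
open MeasureTheory Filter Topology ProbabilityTheory

noncomputable section

/-- The torus `T = ℤ^d / (M₁ℤ × ⋯ × M_dℤ)`. -/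
abbrev Torus (d : ℕ) (Md : Fin d → ℕ) : Type := ∀ i : Fin d, ZMod (Md i)

/-- Projection of `ℤ^d` onto the torus, `x ↦ x mod M`. -/
def projT {d : ℕ} (Md : Fin d → ℕ) (x : Fin d → ℤ) : Torus d Md :=
  fun i => (x i : ZMod (Md i))

/-- A canonical representative in `ℤ^d` of a point of the torus. -/
def repT {d : ℕ} (Md : Fin d → ℕ) [∀ i, NeZero (Md i)] (t : Torus d Md) : Fin d → ℤ :=
  fun i => ((t i).val : ℤ)

/-- `p` is a periodic environment on `ℤ^d`: each `p x` is a probability distribution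
on `ℤ^d` (the jump distribution at `x`), and `x ↦ p x` is `M`-periodic. -/
def IsPeriodicEnv {d : ℕ} (Md : Fin d → ℕ) (p : (Fin d → ℤ) → (Fin d → ℤ) → ℝ) : Prop :=
  (∀ x y, 0 ≤ p x y) ∧ (∀ x, HasSum (p x) 1) ∧
    ∀ (x y : Fin d → ℤ) (i : Fin d), p (x + Pi.single i (Md i : ℤ)) y = p x y

/-- The transition matrix of the induced Markov chain on the torus:
`P a b = ∑_{z : ℤ^d, a + z ∼ b} p_a(z)` (the jump `z` leads from the class `a`
to the class `b` iff `a + (z mod M) = b`). -/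
def indMatrix {d : ℕ} (Md : Fin d → ℕ) [∀ i, NeZero (Md i)]
    (p : (Fin d → ℤ) → (Fin d → ℤ) → ℝ) : Matrix (Torus d Md) (Torus d Md) ℝ :=
  Matrix.of fun a b => ∑' z : Fin d → ℤ, if a + projT Md z = b then p (repT Md a) z else 0

/-- Irreducibility of a finite-state transition matrix: every state can be reached
from every state with positive probability in finitely many (positively many) steps. -/
def MatIrreducible {T : Type*} [Fintype T] [DecidableEq T] (P : Matrix T T ℝ) : Prop :=
  ∀ a b : T, ∃ n : ℕ, 0 < n ∧ 0 < (P ^ n) a b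

/-- Aperiodicity of a finite-state transition matrix: for every state, the gcd of
the possible return times is `1`. -/
def MatAperiodic {T : Type*} [Fintype T] [DecidableEq T] (P : Matrix T T ℝ) : Prop :=
  ∀ a : T, ∀ m : ℕ, (∀ n : ℕ, 0 < n → 0 < (P ^ n) a a → m ∣ n) → m = 1

/-- `π` is a stationary probability distribution for the transition matrix `P`. -/
def IsStationaryDist {T : Type*} [Fintype T] (P : Matrix T T ℝ) (π : T → ℝ) : Prop :=
  (∀ a, 0 ≤ π a) ∧ (∑ a, π a = 1) ∧ ∀ b, ∑ a, π a * P a b = π b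

/-- The drift vector `ν = ∑_{x ∈ T} π(x) ∑_{y ∈ ℤ^d} p_x(y) y`. -/
def driftVec {d : ℕ} (Md : Fin d → ℕ) [∀ i, NeZero (Md i)]
    (p : (Fin d → ℤ) → (Fin d → ℤ) → ℝ) (π : Torus d Md → ℝ) : Fin d → ℝ :=
  fun i => ∑ a : Torus d Md, π a * ∑' y : Fin d → ℤ, p (repT Md a) y * (y i : ℝ)

/-- `μ` is the law of the random walk in the environment `p` started at `x₀`,
as a probability measure on trajectory space: the probability of every cylinder set
is the corresponding product of one-step transition probabilities. -/
def IsRWPELaw {d : ℕ} (p : (Fin d → ℤ) → (Fin d → ℤ) → ℝ) (x₀ : Fin d → ℤ)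
    (μ : Measure (ℕ → (Fin d → ℤ))) : Prop :=
  IsProbabilityMeasure μ ∧
    ∀ (n : ℕ) (x : ℕ → (Fin d → ℤ)),
      μ {ω | ∀ i ≤ n, ω i = x i} =
        ENNReal.ofReal ((if x 0 = x₀ then (1 : ℝ) else 0) *
          ∏ i ∈ Finset.range n, p (x i) (x (i + 1) - x i))

/-- `e` is one of the `2d` unit vectors of `ℤ^d`. -/
def IsUnitVec {d : ℕ} (e : Fin d → ℤ) : Prop :=
  ∃ i : Fin d, e = Pi.single i 1 ∨ e = -Pi.single i 1

/-- The environment is nearest neighbour: only jumps to nearest neighbours have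
positive probability. -/
def IsNearestNeighbour {d : ℕ} (p : (Fin d → ℤ) → (Fin d → ℤ) → ℝ) : Prop :=
  ∀ x y, p x y ≠ 0 → IsUnitVec y

/-- The average negative gradient `g` of the potential,
`g_i = (1/M_i) ∑_{j=0}^{M_i - 1} log (p_{j eᵢ}(eᵢ) / p_{(j+1) eᵢ}(-eᵢ))`. -/
def avgNegGrad {d : ℕ} (Md : Fin d → ℕ) (p : (Fin d → ℤ) → (Fin d → ℤ) → ℝ) :
    Fin d → ℝ :=
  fun i => (Md i : ℝ)⁻¹ * ∑ j ∈ Finset.range (Md i),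
    Real.log (p (Pi.single i (j : ℤ)) (Pi.single i 1) /
      p (Pi.single i ((j : ℤ) + 1)) (-Pi.single i 1))

/-- The conditional expected jump `μ_{xy}` of the walk, given that the induced chain
jumps from `x` to `y`. -/
def condJump {d : ℕ} (Md : Fin d → ℕ) [∀ i, NeZero (Md i)]
    (p : (Fin d → ℤ) → (Fin d → ℤ) → ℝ) (a b : Torus d Md) : Fin d → ℝ :=
  if indMatrix Md p a b = 0 then 0
  else fun i =>
    (∑' z : Fin d → ℤ, if a + projT Md z = b then p (repT Md a) z * (z i : ℝ) else 0) /
      indMatrix Md p a b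


section
open Finset
noncomputable section
variable {d : ℕ} {Md : Fin d → ℕ} [∀ i, NeZero (Md i)]

lemma neg_single (i : Fin d) : (-Pi.single i (1:ℤ) : Fin d → ℤ) = Pi.single i (-1:ℤ) := by
  ext j; by_cases h : j = i <;> simp [Pi.single_apply, h]

lemma isUnitVec_single (i : Fin d) : IsUnitVec (Pi.single i (1:ℤ)) := ⟨i, Or.inl rfl⟩
lemma isUnitVec_neg_single (i : Fin d) : IsUnitVec (-Pi.single i (1:ℤ)) := ⟨i, Or.inr rfl⟩

lemma shift_mul (h : (Fin d → ℤ) → ℝ) (c : Fin d → ℤ)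
    (hstep : ∀ x i, h (x + Pi.single i (c i)) = h x) :
    ∀ (x : Fin d → ℤ) (i : Fin d) (k : ℤ), h (x + Pi.single i (k * c i)) = h x := by
  intro x i k
  induction k using Int.induction_on with
  | zero => simp
  | succ k ih =>
      have e1 : x + Pi.single i ((k+1) * c i) = (x + Pi.single i (k * c i)) + Pi.single i (c i) := by
        rw [add_assoc, ← Pi.single_add]; ring_nf
      rw [e1, hstep, ih]
  | pred k ih =>
      have e1 : x + Pi.single i ((-(k:ℤ)) * c i) = (x + Pi.single i ((-(k:ℤ)-1) * c i)) + Pi.single i (c i) := by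
        rw [add_assoc, ← Pi.single_add]; ring_nf
      calc h (x + Pi.single i ((-(k:ℤ)-1) * c i))
          = h ((x + Pi.single i ((-(k:ℤ)-1) * c i)) + Pi.single i (c i)) := (hstep _ _).symm
        _ = h (x + Pi.single i ((-(k:ℤ)) * c i)) := by rw [← e1]
        _ = h x := ih

lemma shift_vec (h : (Fin d → ℤ) → ℝ) (v : Fin d → ℤ)
    (hstep : ∀ x i, h (x + Pi.single i (v i)) = h x) :
    ∀ x, h (x + v) = h x := by
  intro x
  have key : ∀ s : Finset (Fin d), h (x + ∑ i ∈ s, Pi.single i (v i)) = h x := by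
    intro s
    induction s using Finset.induction_on with
    | empty => simp
    | @insert j s' hj ih =>
        have e2 : x + ∑ i ∈ insert j s', Pi.single i (v i)
            = (x + ∑ i ∈ s', Pi.single i (v i)) + Pi.single j (v j) := by
          rw [Finset.sum_insert hj]; ring
        rw [e2, hstep, ih]
  have := key Finset.univ
  rwa [Finset.univ_sum_single] at this
end
section
open Finset
noncomputable section
set_option linter.unusedSectionVars false
variable {d : ℕ} {Md : Fin d → ℕ} [∀ i, NeZero (Md i)]

lemma projT_repT (a : Torus d Md) : projT Md (repT Md a) = a := by
  funext i; simp [projT, repT]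

lemma projT_add (x y : Fin d → ℤ) : projT Md (x + y) = projT Md x + projT Md y := by
  funext i; simp [projT]

lemma projT_neg (x : Fin d → ℤ) : projT Md (-x) = - projT Md x := by
  funext i; simp [projT]

lemma dvd_of_projT_eq {y z : Fin d → ℤ} (hyz : projT Md y = projT Md z) (i : Fin d) :
    (Md i : ℤ) ∣ (z i - y i) := by
  have h1 := congrFun hyz i
  simp only [projT] at h1
  have h2 : ((z i - y i : ℤ) : ZMod (Md i)) = 0 := by push_cast [h1]; ring
  exact (ZMod.intCast_zmod_eq_zero_iff_dvd _ _).mp h2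

lemma congr_of_projT (h : (Fin d → ℤ) → ℝ)
    (hstep : ∀ x i, h (x + Pi.single i ((Md i : ℤ))) = h x)
    {y z : Fin d → ℤ} (hyz : projT Md y = projT Md z) : h y = h z := by
  set v : Fin d → ℤ := fun i => z i - y i with hv
  have hdvd : ∀ i, (Md i : ℤ) ∣ v i := fun i => dvd_of_projT_eq hyz i
  have hzyv : z = y + v := by funext i; simp [hv]
  have hstep' : ∀ x i, h (x + Pi.single i (v i)) = h x := by
    intro x i
    obtain ⟨k, hk⟩ := hdvd i
    rw [hk, mul_comm]
    exact shift_mul h (fun i => (Md i : ℤ)) hstep x i k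
  rw [hzyv, shift_vec h v hstep']
end
section
open Finset
noncomputable section
set_option linter.unusedSectionVars false
variable {d : ℕ} {Md : Fin d → ℕ} [∀ i, NeZero (Md i)]

def unitVecs (d : ℕ) : Finset (Fin d → ℤ) :=
  Finset.univ.image (fun is : Fin d × Bool => if is.2 then Pi.single is.1 1 else -Pi.single is.1 1)

lemma mem_unitVecs {y : Fin d → ℤ} : y ∈ unitVecs d ↔ IsUnitVec y := by
  simp only [unitVecs, Finset.mem_image, Finset.mem_univ, true_and, IsUnitVec]
  constructor
  · rintro ⟨⟨i, b⟩, h⟩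
    cases b
    · exact ⟨i, Or.inr h.symm⟩
    · exact ⟨i, Or.inl h.symm⟩
  · rintro ⟨i, h | h⟩
    · exact ⟨⟨i, true⟩, h.symm⟩
    · exact ⟨⟨i, false⟩, h.symm⟩

lemma neg_mem_unitVecs {e : Fin d → ℤ} (he : e ∈ unitVecs d) : -e ∈ unitVecs d := by
  rw [mem_unitVecs] at *
  obtain ⟨i, h | h⟩ := he
  · exact ⟨i, Or.inr (by rw [h])⟩
  · exact ⟨i, Or.inl (by rw [h, neg_neg])⟩

lemma tsum_eq_sum_unit (f : (Fin d → ℤ) → ℝ) (hf : ∀ y, ¬ IsUnitVec y → f y = 0) :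
    ∑' y, f y = ∑ e ∈ unitVecs d, f e := by
  refine tsum_eq_sum (fun b hb => hf b ?_)
  rwa [← mem_unitVecs]
end
section
open Finset
noncomputable section
set_option linter.unusedSectionVars false
variable {d : ℕ} {Md : Fin d → ℕ} [∀ i, NeZero (Md i)]
variable {p : (Fin d → ℤ) → (Fin d → ℤ) → ℝ} (henv : IsPeriodicEnv Md p)
  (hnn : IsNearestNeighbour p) (hpos : ∀ x e, IsUnitVec e → 0 < p x e)

include henv in
private lemma positivity0 {a : Torus d Md} {b : Torus d Md} (e : Fin d → ℤ) :
    0 ≤ if a + projT Md e = b then p (repT Md a) e else 0 := by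
  split
  · exact henv.1 _ _
  · exact le_rfl

include henv in
lemma p_congr {x x' : Fin d → ℤ} (hxx : projT Md x = projT Md x') (y : Fin d → ℤ) :
    p x y = p x' y :=
  congr_of_projT (fun z => p z y) (fun z i => henv.2.2 z y i) hxx

include hnn in
lemma p_zero_of_not_unit {y : Fin d → ℤ} (hy : ¬ IsUnitVec y) (x : Fin d → ℤ) : p x y = 0 := by
  by_contra h; exact hy (hnn x y h)

include henv hnn in
lemma sum_p_unitVecs (x : Fin d → ℤ) : ∑ e ∈ unitVecs d, p x e = 1 := by
  rw [← tsum_eq_sum_unit (p x) (fun y hy => p_zero_of_not_unit hnn hy x)]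
  exact (henv.2.1 x).tsum_eq

include hnn in
lemma indMatrix_eq (a b : Torus d Md) :
    indMatrix Md p a b = ∑ e ∈ unitVecs d, if a + projT Md e = b then p (repT Md a) e else 0 := by
  show (∑' z : Fin d → ℤ, if a + projT Md z = b then p (repT Md a) z else 0) = _
  refine tsum_eq_sum_unit _ (fun y hy => ?_)
  rw [p_zero_of_not_unit hnn hy]; simp

include henv hnn in
lemma indMatrix_nonneg (a b : Torus d Md) : 0 ≤ indMatrix Md p a b := by
  rw [indMatrix_eq hnn]
  exact Finset.sum_nonneg (fun e _ => positivity0 henv e)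

include henv hnn in
lemma indMatrix_weighted (a : Torus d Md) (f : Torus d Md → ℝ) :
    ∑ e ∈ unitVecs d, p (repT Md a) e * f (a + projT Md e)
      = ∑ b, indMatrix Md p a b * f b := by
  have : ∀ b, indMatrix Md p a b * f b
      = ∑ e ∈ unitVecs d, (if a + projT Md e = b then p (repT Md a) e * f b else 0) := by
    intro b
    rw [indMatrix_eq hnn, Finset.sum_mul]
    exact Finset.sum_congr rfl (fun e _ => by split <;> simp
    )
  rw [Finset.sum_congr rfl (fun b _ => this b), Finset.sum_comm]
  refine Finset.sum_congr rfl (fun e _ => ?_)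
  rw [Finset.sum_ite_eq (Finset.univ) (a + projT Md e) (fun b => p (repT Md a) e * f b)]
  simp

include henv hnn in
lemma indMatrix_rowsum (a : Torus d Md) : ∑ b, indMatrix Md p a b = 1 := by
  have h2 := indMatrix_weighted henv hnn a (fun _ => 1)
  simp only [mul_one] at h2
  rw [← h2, sum_p_unitVecs henv hnn]

include henv hnn hpos in
lemma indMatrix_pos_step (a : Torus d Md) {e : Fin d → ℤ} (he : IsUnitVec e) :
    0 < indMatrix Md p a (a + projT Md e) := by
  rw [indMatrix_eq hnn]
  refine Finset.sum_pos' (fun e2 _ => positivity0 henv e2) ?_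
  exact ⟨e, mem_unitVecs.mpr he, by simp [hpos _ _ he]⟩
end
section
open Finset
noncomputable section
set_option linter.unusedSectionVars false
variable {d : ℕ} {Md : Fin d → ℕ} [∀ i, NeZero (Md i)]
variable {p : (Fin d → ℤ) → (Fin d → ℤ) → ℝ} (henv : IsPeriodicEnv Md p)
  (hnn : IsNearestNeighbour p) (hpos : ∀ x e, IsUnitVec e → 0 < p x e)
variable {π : Torus d Md → ℝ} (hπ : IsStationaryDist (indMatrix Md p) π)

include henv hnn in
lemma indPow_nonneg : ∀ (n : ℕ) (a b : Torus d Md), 0 ≤ ((indMatrix Md p) ^ n) a b := by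
  intro n
  induction n with
  | zero => intro a b; rw [pow_zero]; by_cases h : a = b <;> simp [Matrix.one_apply, h]
  | succ n ih =>
      intro a b
      rw [pow_succ, Matrix.mul_apply]
      exact Finset.sum_nonneg (fun c _ => mul_nonneg (ih a c) (indMatrix_nonneg henv hnn c b))

include hπ in
lemma stationary_pow : ∀ (n : ℕ) (b : Torus d Md),
    ∑ a, π a * ((indMatrix Md p) ^ n) a b = π b := by
  intro n
  induction n with
  | zero => intro b; simp [Matrix.one_apply, Finset.sum_ite_eq]
  | succ n ih =>
      intro b
      have : ∀ a, π a * ((indMatrix Md p) ^ (n+1)) a b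
          = ∑ c, (π a * ((indMatrix Md p) ^ n) a c) * indMatrix Md p c b := by
        intro a
        rw [pow_succ, Matrix.mul_apply, Finset.mul_sum]
        exact Finset.sum_congr rfl (fun c _ => by ring)
      rw [Finset.sum_congr rfl (fun a _ => this a), Finset.sum_comm]
      calc ∑ c, ∑ a, (π a * ((indMatrix Md p) ^ n) a c) * indMatrix Md p c b
          = ∑ c, π c * indMatrix Md p c b := by
            refine Finset.sum_congr rfl (fun c _ => ?_)
            rw [← Finset.sum_mul, ih c]
        _ = π b := hπ.2.2 b

include henv hnn hpos in
lemma reach : ∀ (m : ℕ) (x : Fin d → ℕ), (∑ i, x i = m) → ∀ a : Torus d Md,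
    ∃ n, 0 < ((indMatrix Md p) ^ n) a (a + projT Md (fun i => (x i : ℤ))) := by
  intro m
  induction m with
  | zero =>
      intro x hx a
      have hx0 : ∀ i, x i = 0 := by
        intro i
        exact (Finset.sum_eq_zero_iff.mp hx) i (Finset.mem_univ i)
      have : (fun i => ((x i : ℤ))) = (0 : Fin d → ℤ) := by funext i; simp [hx0 i]
      refine ⟨0, ?_⟩
      rw [this]
      have : projT Md (0 : Fin d → ℤ) = 0 := by funext i; simp [projT]
      rw [this, add_zero, pow_zero, Matrix.one_apply_eq]
      norm_num
  | succ m ih =>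
      intro x hx a
      have : ∃ i, x i ≠ 0 := by
        by_contra hc
        push_neg at hc
        simp [hc] at hx
      obtain ⟨i, hi⟩ := this
      set x' : Fin d → ℕ := Function.update x i (x i - 1) with hx'
      have hsum' : ∑ j, x' j = m := by
        have h1 : ∑ j, x' j = (x i - 1) + ∑ j ∈ Finset.univ.erase i, x j := by
          rw [hx', Finset.sum_update_of_mem (Finset.mem_univ i), ← Finset.erase_eq]
        have h2 : ∑ j, x j = x i + ∑ j ∈ Finset.univ.erase i, x j :=
          (Finset.add_sum_erase _ _ (Finset.mem_univ i)).symm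
        omega
      set a₁ := a + projT Md (Pi.single i (1:ℤ)) with ha₁
      obtain ⟨n, hn⟩ := ih x' hsum' a₁
      have hvec : (Pi.single i (1:ℤ)) + (fun j => ((x' j : ℤ))) = fun j => ((x j : ℤ)) := by
        funext j
        by_cases hji : j = i
        · subst hji
          simp [hx', Pi.single_apply]
          omega
        · simp [hx', Pi.single_apply, hji, Function.update_of_ne hji]
      have htarget : a₁ + projT Md (fun j => ((x' j : ℤ))) = a + projT Md (fun j => ((x j : ℤ))) := by
        rw [ha₁, add_assoc, ← projT_add, hvec]
      rw [htarget] at hn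
      refine ⟨n + 1, ?_⟩
      rw [pow_succ', Matrix.mul_apply]
      refine Finset.sum_pos' (fun c _ => mul_nonneg (indMatrix_nonneg henv hnn a c)
        (indPow_nonneg henv hnn n c _)) ⟨a₁, Finset.mem_univ a₁, ?_⟩
      exact mul_pos (indMatrix_pos_step henv hnn hpos a (isUnitVec_single i)) hn

include henv hnn hpos hπ in
lemma pi_pos : ∀ b, 0 < π b := by
  have hex : ∃ a₀, 0 < π a₀ := by
    by_contra hc
    push_neg at hc
    have : ∀ a, π a = 0 := fun a => le_antisymm (hc a) (hπ.1 a)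
    have h1 := hπ.2.1
    simp [this] at h1
  obtain ⟨a₀, ha₀⟩ := hex
  intro b
  obtain ⟨n, hn⟩ := reach henv hnn hpos (∑ i, ((b - a₀) i).val) (fun i => ((b - a₀) i).val) rfl a₀
  have hb : a₀ + projT Md (fun i => ((((b - a₀) i).val : ℕ) : ℤ)) = b := by
    have : projT Md (fun i => ((((b - a₀) i).val : ℕ) : ℤ)) = b - a₀ := projT_repT (b - a₀)
    rw [this]; ring
  rw [hb] at hn
  calc (0:ℝ) < π a₀ * ((indMatrix Md p) ^ n) a₀ b := mul_pos ha₀ hn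
    _ ≤ ∑ a, π a * ((indMatrix Md p) ^ n) a b :=
        Finset.single_le_sum (fun a _ => mul_nonneg (hπ.1 a) (indPow_nonneg henv hnn n a b))
          (Finset.mem_univ a₀)
    _ = π b := stationary_pow hπ n b
end
section
open Finset
noncomputable section
set_option linter.unusedSectionVars false
variable {d : ℕ} {Md : Fin d → ℕ} [∀ i, NeZero (Md i)]
variable {p : (Fin d → ℤ) → (Fin d → ℤ) → ℝ} (henv : IsPeriodicEnv Md p)
  (hnn : IsNearestNeighbour p) (hpos : ∀ x e, IsUnitVec e → 0 < p x e)
variable {u : (Fin d → ℤ) → ℝ} (hu0 : u 0 = 0)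
  (hu : ∀ x e, IsUnitVec e → u x - u (x + e) = Real.log (p x e / p (x + e) (-e)))

lemma const_of_unit_steps (h : (Fin d → ℤ) → ℝ)
    (hstep : ∀ x j, h (x + Pi.single j 1) = h x) : ∀ x, h x = h 0 := by
  intro x
  have h1 : ∀ (y : Fin d → ℤ) (j : Fin d) (k : ℤ), h (y + Pi.single j k) = h y := by
    intro y j k
    have := shift_mul h (fun _ => 1) (fun y j => hstep y j) y j k
    simpa using this
  have := shift_vec h x (fun y j => h1 y j (x j)) 0
  simpa using this

lemma MdR_ne_zero (i : Fin d) : ((Md i : ℝ)) ≠ 0 := by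
  have := NeZero.ne (Md i); positivity

include hu0 hu in
lemma u_single_M (i : Fin d) :
    u (Pi.single i ((Md i : ℤ))) = -(Md i : ℝ) * avgNegGrad Md p i := by
  have key : ∀ j : ℕ, u (Pi.single i ((j:ℤ))) - u (Pi.single i ((j:ℤ)+1))
      = Real.log (p (Pi.single i (j : ℤ)) (Pi.single i 1) /
          p (Pi.single i ((j : ℤ) + 1)) (-Pi.single i 1)) := by
    intro j
    have h1 := hu (Pi.single i ((j:ℤ))) (Pi.single i 1) (isUnitVec_single i)
    rw [← Pi.single_add] at h1
    exact h1
  have tele : ∑ j ∈ Finset.range (Md i),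
      (u (Pi.single i ((j:ℤ))) - u (Pi.single i (((j+1:ℕ)):ℤ)))
      = u (Pi.single i ((0:ℕ):ℤ)) - u (Pi.single i (((Md i):ℕ):ℤ)) :=
    Finset.sum_range_sub' (fun j => u (Pi.single i ((j:ℤ)))) (Md i)
  have hgi : avgNegGrad Md p i = (Md i : ℝ)⁻¹ *
      (u (Pi.single i ((0:ℕ):ℤ)) - u (Pi.single i (((Md i):ℕ):ℤ))) := by
    rw [avgNegGrad, ← tele]
    congr 1
    refine Finset.sum_congr rfl (fun j _ => ?_)
    rw [← key j]
    norm_num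
  have h0 : u (Pi.single i ((0:ℕ):ℤ)) = 0 := by
    simpa using hu0
  rw [hgi, h0, zero_sub]
  field_simp
  rw [eq_div_iff (MdR_ne_zero i)]

include henv hu0 hu in
lemma u_period (x : Fin d → ℤ) (i : Fin d) :
    u (x + Pi.single i ((Md i : ℤ))) = u x + u (Pi.single i ((Md i : ℤ))) := by
  set D : (Fin d → ℤ) → ℝ := fun y => u (y + Pi.single i ((Md i : ℤ))) - u y with hD
  have hstep : ∀ y j, D (y + Pi.single j 1) = D y := by
    intro y j
    have e1 : IsUnitVec (Pi.single j (1:ℤ)) := isUnitVec_single j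
    have h1 := hu y (Pi.single j 1) e1
    have h2 := hu (y + Pi.single i ((Md i : ℤ))) (Pi.single j 1) e1
    have hp1 : p (y + Pi.single i ((Md i : ℤ))) (Pi.single j 1) = p y (Pi.single j 1) :=
      henv.2.2 y _ i
    have hp2 : p (y + Pi.single i ((Md i : ℤ)) + Pi.single j 1) (-Pi.single j 1)
        = p (y + Pi.single j 1) (-Pi.single j 1) := by
      have : y + Pi.single i ((Md i : ℤ)) + Pi.single j 1
          = (y + Pi.single j 1) + Pi.single i ((Md i : ℤ)) := by ring
      rw [this, henv.2.2]
    rw [hp1, hp2, ← h1] at h2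
    have : y + Pi.single j 1 + Pi.single i ((Md i : ℤ))
        = y + Pi.single i ((Md i : ℤ)) + Pi.single j 1 := by ring
    simp only [hD, this]
    linarith
  have := const_of_unit_steps D hstep x
  simp only [hD] at this
  simp only [zero_add] at this
  linarith [this, hu0]
end
section
open Finset
noncomputable section
set_option linter.unusedSectionVars false
variable {d : ℕ} {Md : Fin d → ℕ} [∀ i, NeZero (Md i)]
variable {p : (Fin d → ℤ) → (Fin d → ℤ) → ℝ} (henv : IsPeriodicEnv Md p)
  (hnn : IsNearestNeighbour p) (hpos : ∀ x e, IsUnitVec e → 0 < p x e)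
variable {u : (Fin d → ℤ) → ℝ} (hu0 : u 0 = 0)
  (hu : ∀ x e, IsUnitVec e → u x - u (x + e) = Real.log (p x e / p (x + e) (-e)))

/-- The corrected potential `φ(x) = u(x) + ⟨g, x⟩`, which is `M`-periodic. -/
def PhiF (Md : Fin d → ℕ) (p : (Fin d → ℤ) → (Fin d → ℤ) → ℝ) (u : (Fin d → ℤ) → ℝ)
    (x : Fin d → ℤ) : ℝ :=
  u x + ∑ i, avgNegGrad Md p i * (x i : ℝ)

lemma lin_single (g : Fin d → ℝ) (i : Fin d) (c : ℤ) :
    ∑ j, g j * ((Pi.single i c : Fin d → ℤ) j : ℝ) = g i * (c : ℝ) := by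
  rw [Finset.sum_eq_single_of_mem i (Finset.mem_univ i)]
  · rw [Pi.single_eq_same]
  · intro j _ hj
    rw [Pi.single_eq_of_ne hj]
    simp

include henv hu0 hu in
lemma PhiF_step (x : Fin d → ℤ) (i : Fin d) :
    PhiF Md p u (x + Pi.single i ((Md i : ℤ))) = PhiF Md p u x := by
  unfold PhiF
  rw [u_period henv hu0 hu x i, u_single_M hu0 hu i]
  have hlin : ∑ j, avgNegGrad Md p j * (((x + Pi.single i ((Md i:ℤ)) : Fin d → ℤ) j : ℤ) : ℝ)
      = ∑ j, avgNegGrad Md p j * ((x j : ℤ) : ℝ)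
        + ∑ j, avgNegGrad Md p j * ((Pi.single i ((Md i:ℤ)) : Fin d → ℤ) j : ℝ) := by
    rw [← Finset.sum_add_distrib]
    refine Finset.sum_congr rfl (fun j _ => ?_)
    have hco : ((x + Pi.single i ((Md i:ℤ)) : Fin d → ℤ) j : ℤ)
        = x j + (Pi.single i ((Md i:ℤ)) : Fin d → ℤ) j := rfl
    rw [hco]
    push_cast
    ring
  rw [hlin, lin_single]
  push_cast
  ring

include henv hu0 hu in
lemma PhiF_congr {y z : Fin d → ℤ} (hyz : projT Md y = projT Md z) :
    PhiF Md p u y = PhiF Md p u z :=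
  congr_of_projT (PhiF Md p u) (fun x i => PhiF_step henv hu0 hu x i) hyz

lemma entropy_term {x y : ℝ} (hx : 0 < x) (hy : 0 < y) :
    x - y ≤ x * (Real.log x - Real.log y) := by
  have h1 : Real.log (y/x) ≤ y/x - 1 := Real.log_le_sub_one_of_pos (div_pos hy hx)
  have h2 : Real.log (y/x) = Real.log y - Real.log x := Real.log_div hy.ne' hx.ne'
  have h3 : x * (y / x) = y := by field_simp
  nlinarith [mul_le_mul_of_nonneg_left h1 hx.le]

lemma entropy_term_strict {x y : ℝ} (hx : 0 < x) (hy : 0 < y) (hxy : x ≠ y) :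
    x - y < x * (Real.log x - Real.log y) := by
  have hne : y / x ≠ 1 := by
    intro h
    rw [div_eq_one_iff_eq hx.ne'] at h
    exact hxy h.symm
  have h1 : Real.log (y/x) < y/x - 1 := Real.log_lt_sub_one_of_pos (div_pos hy hx) hne
  have h2 : Real.log (y/x) = Real.log y - Real.log x := Real.log_div hy.ne' hx.ne'
  have h3 : x * (y / x) = y := by field_simp
  nlinarith [mul_lt_mul_of_pos_left h1 hx]

include henv hnn in
lemma stat_cancel {π : Torus d Md → ℝ} (hπ : IsStationaryDist (indMatrix Md p) π)
    (f : Torus d Md → ℝ) :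
    ∑ a : Torus d Md, ∑ e ∈ unitVecs d,
      (π a * p (repT Md a) e) * (f (a + projT Md e) - f a) = 0 := by
  have key : ∀ a : Torus d Md, ∑ e ∈ unitVecs d,
      (π a * p (repT Md a) e) * (f (a + projT Md e) - f a)
      = π a * ((∑ b, indMatrix Md p a b * f b) - f a) := by
    intro a
    have h1 : ∑ e ∈ unitVecs d, (π a * p (repT Md a) e) * (f (a + projT Md e) - f a)
        = π a * ((∑ e ∈ unitVecs d, p (repT Md a) e * f (a + projT Md e))
            - (∑ e ∈ unitVecs d, p (repT Md a) e) * f a) := by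
      rw [mul_sub, Finset.mul_sum, Finset.sum_mul, Finset.mul_sum, ← Finset.sum_sub_distrib]
      refine Finset.sum_congr rfl (fun e _ => ?_)
      ring
    rw [h1, indMatrix_weighted henv hnn a f, sum_p_unitVecs henv hnn, one_mul, mul_sub]
  calc ∑ a : Torus d Md, ∑ e ∈ unitVecs d,
        (π a * p (repT Md a) e) * (f (a + projT Md e) - f a)
      = ∑ a : Torus d Md, (∑ b, π a * (indMatrix Md p a b * f b)) - ∑ a : Torus d Md, π a * f a := by
        rw [← Finset.sum_sub_distrib]
        refine Finset.sum_congr rfl (fun a _ => ?_)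
        rw [key a, mul_sub, Finset.mul_sum]
    _ = ∑ b, (∑ a, π a * indMatrix Md p a b) * f b - ∑ a : Torus d Md, π a * f a := by
        rw [Finset.sum_comm]
        congr 1
        refine Finset.sum_congr rfl (fun b _ => ?_)
        rw [Finset.sum_mul]
        exact Finset.sum_congr rfl (fun a _ => by ring)
    _ = 0 := by
        have : ∀ b, (∑ a, π a * indMatrix Md p a b) * f b = π b * f b :=
          fun b => by rw [hπ.2.2 b]
        rw [Finset.sum_congr rfl (fun b _ => this b), sub_self]

lemma IsUnitVec.neg {e : Fin d → ℤ} (he : IsUnitVec e) : IsUnitVec (-e) := by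
  obtain ⟨i, h | h⟩ := he
  · exact ⟨i, Or.inr (by rw [h])⟩
  · exact ⟨i, Or.inl (by rw [h, neg_neg])⟩
end

section
open Finset
set_option linter.unusedVariables false
/-- **Main theorem.** For a reversible nearest-neighbour RWPE with all one-step
probabilities positive (so the induced chain is irreducible and has a unique
stationary distribution `π`), if the average negative gradient `g` of the potential is
nonzero, then `⟨g, ν⟩ > 0` for the drift `ν = ∑_{x∈T} π(x) ∑_y p_x(y) y`. -/
theorem rwpe_grad_dot_drift_pos (d : ℕ) (hd : 0 < d) (Md : Fin d → ℕ)
    [∀ i, NeZero (Md i)]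
    (p : (Fin d → ℤ) → (Fin d → ℤ) → ℝ) (henv : IsPeriodicEnv Md p)
    (hnn : IsNearestNeighbour p) (hpos : ∀ x e, IsUnitVec e → 0 < p x e)
    (u : (Fin d → ℤ) → ℝ) (hu0 : u 0 = 0)
    (hu : ∀ x e, IsUnitVec e → u x - u (x + e) = Real.log (p x e / p (x + e) (-e)))
    (π : Torus d Md → ℝ) (hπ : IsStationaryDist (indMatrix Md p) π)
    (hg : avgNegGrad Md p ≠ 0) :
    0 < ∑ i, avgNegGrad Md p i * driftVec Md p π i := by
  classical
  have hππ : ∀ b, 0 < π b := pi_pos henv hnn hpos hπ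
  -- the periodic correction of the potential, viewed on the torus
  let φt : Torus d Md → ℝ := fun b => PhiF Md p u (repT Md b)
  -- weights and the edge-reversal involution on pairs
  let F : (Torus d Md) × (Fin d → ℤ) → ℝ := fun t => π t.1 * p (repT Md t.1) t.2
  let σ : (Torus d Md) × (Fin d → ℤ) → (Torus d Md) × (Fin d → ℤ) :=
    fun t => (t.1 + projT Md t.2, -t.2)
  let S : Finset ((Torus d Md) × (Fin d → ℤ)) := Finset.univ ×ˢ unitVecs d
  have hmemS : ∀ t : (Torus d Md) × (Fin d → ℤ), t ∈ S ↔ t.2 ∈ unitVecs d := by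
    intro t; simp [S, Finset.mem_product]
  have hFpos : ∀ t ∈ S, 0 < F t := by
    intro t ht
    exact mul_pos (hππ t.1) (hpos _ _ (mem_unitVecs.mp ((hmemS t).mp ht)))
  have hσmem : ∀ t ∈ S, σ t ∈ S := by
    intro t ht
    rw [hmemS] at *
    exact neg_mem_unitVecs ht
  have hσσ : ∀ t, σ (σ t) = t := by
    rintro ⟨a, e⟩
    show (a + projT Md e + projT Md (-e), -(-e)) = (a, e)
    rw [projT_neg, add_neg_cancel_right, neg_neg]
  have hFs : ∑ t ∈ S, F (σ t) = ∑ t ∈ S, F t := by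
    refine Finset.sum_nbij' σ σ hσmem hσmem (fun t _ => hσσ t) (fun t _ => hσσ t) ?_
    intro t _
    rfl
  -- Step 1: express the goal quantity as a double sum over torus points and unit vectors
  have hdrift : ∀ i, driftVec Md p π i
      = ∑ a, π a * ∑ e ∈ unitVecs d, p (repT Md a) e * (e i : ℝ) := by
    intro i
    unfold driftVec
    refine Finset.sum_congr rfl (fun a _ => ?_)
    congr 1
    refine tsum_eq_sum_unit _ (fun y hy => ?_)
    rw [p_zero_of_not_unit hnn hy, zero_mul]
  have hLHS : ∑ i, avgNegGrad Md p i * driftVec Md p π i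
      = ∑ a, ∑ e ∈ unitVecs d, (π a * p (repT Md a) e) * (∑ i, avgNegGrad Md p i * (e i : ℝ)) := by
    calc ∑ i, avgNegGrad Md p i * driftVec Md p π i
        = ∑ i, ∑ a, ∑ e ∈ unitVecs d,
            (π a * p (repT Md a) e) * (avgNegGrad Md p i * (e i : ℝ)) := by
          refine Finset.sum_congr rfl (fun i _ => ?_)
          rw [hdrift i, Finset.mul_sum]
          refine Finset.sum_congr rfl (fun a _ => ?_)
          rw [Finset.mul_sum, Finset.mul_sum]
          refine Finset.sum_congr rfl (fun e _ => ?_)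
          ring
      _ = ∑ a, ∑ i, ∑ e ∈ unitVecs d,
            (π a * p (repT Md a) e) * (avgNegGrad Md p i * (e i : ℝ)) := Finset.sum_comm
      _ = ∑ a, ∑ e ∈ unitVecs d, ∑ i,
            (π a * p (repT Md a) e) * (avgNegGrad Md p i * (e i : ℝ)) := by
          exact Finset.sum_congr rfl (fun a _ => Finset.sum_comm)
      _ = ∑ a, ∑ e ∈ unitVecs d,
            (π a * p (repT Md a) e) * (∑ i, avgNegGrad Md p i * (e i : ℝ)) := by
          refine Finset.sum_congr rfl (fun a _ => Finset.sum_congr rfl (fun e _ => ?_))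
          rw [Finset.mul_sum]
  -- Step 2: pointwise identity for ⟨g, e⟩
  have hkey : ∀ (a : Torus d Md), ∀ e ∈ unitVecs d,
      (∑ i, avgNegGrad Md p i * (e i : ℝ))
      = (Real.log (p (repT Md a) e) - Real.log (p (repT Md a + e) (-e)))
        + (φt (a + projT Md e) - φt a) := by
    intro a e heUV
    have he : IsUnitVec e := mem_unitVecs.mp heUV
    have hne : IsUnitVec (-e) := he.neg
    have h1 := hu (repT Md a) e he
    rw [Real.log_div (hpos _ e he).ne' (hpos _ (-e) hne).ne'] at h1
    have h2 : φt (a + projT Md e) = PhiF Md p u (repT Md a + e) :=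
      PhiF_congr henv hu0 hu (by rw [projT_repT, projT_add, projT_repT])
    have h3 : φt a = PhiF Md p u (repT Md a) := rfl
    have h4 : PhiF Md p u (repT Md a + e) - PhiF Md p u (repT Md a)
        = (u (repT Md a + e) - u (repT Md a)) + ∑ i, avgNegGrad Md p i * (e i : ℝ) := by
      unfold PhiF
      have hsum : ∑ i, avgNegGrad Md p i * (((repT Md a + e : Fin d → ℤ) i : ℤ) : ℝ)
          = ∑ i, avgNegGrad Md p i * ((repT Md a i : ℤ) : ℝ)
            + ∑ i, avgNegGrad Md p i * ((e i : ℤ) : ℝ) := by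
        rw [← Finset.sum_add_distrib]
        refine Finset.sum_congr rfl (fun i _ => ?_)
        have : ((repT Md a + e : Fin d → ℤ) i : ℤ) = repT Md a i + e i := rfl
        rw [this]
        push_cast
        ring
      rw [hsum]
      ring
    rw [h2, h3, h4]
    linarith
  -- Step 3: the φ part cancels by stationarity, and so does the log π part
  have hT2 : ∑ a, ∑ e ∈ unitVecs d,
      (π a * p (repT Md a) e) * (φt (a + projT Md e) - φt a) = 0 :=
    stat_cancel henv hnn hπ φt
  have hT3 : ∑ a, ∑ e ∈ unitVecs d,
      (π a * p (repT Md a) e) * (Real.log (π (a + projT Md e)) - Real.log (π a)) = 0 :=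
    stat_cancel henv hnn hπ (fun b => Real.log (π b))
  -- Step 4: pointwise expansion of logs into the entropy form
  have hlogkey : ∀ (a : Torus d Md), ∀ e ∈ unitVecs d,
      (π a * p (repT Md a) e) * (Real.log (p (repT Md a) e) - Real.log (p (repT Md a + e) (-e)))
      = F (a, e) * (Real.log (F (a, e)) - Real.log (F (σ (a, e))))
        + (π a * p (repT Md a) e) * (Real.log (π (a + projT Md e)) - Real.log (π a)) := by
    intro a e heUV
    have he : IsUnitVec e := mem_unitVecs.mp heUV
    have hne : IsUnitVec (-e) := he.neg
    have hp2 : p (repT Md (a + projT Md e)) (-e) = p (repT Md a + e) (-e) :=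
      p_congr henv (by rw [projT_repT, projT_add, projT_repT]) (-e)
    have hl1 : Real.log (F (a, e)) = Real.log (π a) + Real.log (p (repT Md a) e) :=
      Real.log_mul (hππ a).ne' (hpos _ e he).ne'
    have hl2 : Real.log (F (σ (a, e)))
        = Real.log (π (a + projT Md e)) + Real.log (p (repT Md a + e) (-e)) := by
      show Real.log (π (a + projT Md e) * p (repT Md (a + projT Md e)) (-e)) = _
      rw [hp2]
      exact Real.log_mul (hππ _).ne' (hpos _ (-e) hne).ne'
    have hF1 : F (a, e) = π a * p (repT Md a) e := rfl
    rw [hl1, hl2, hF1]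
    ring
  -- Step 5: the goal equals the entropy production
  have hmain : ∑ i, avgNegGrad Md p i * driftVec Md p π i
      = ∑ t ∈ S, F t * (Real.log (F t) - Real.log (F (σ t))) := by
    rw [hLHS]
    have e1 : ∑ a, ∑ e ∈ unitVecs d,
        (π a * p (repT Md a) e) * (∑ i, avgNegGrad Md p i * (e i : ℝ))
        = ∑ a, ∑ e ∈ unitVecs d,
            ((π a * p (repT Md a) e) *
              (Real.log (p (repT Md a) e) - Real.log (p (repT Md a + e) (-e)))
            + (π a * p (repT Md a) e) * (φt (a + projT Md e) - φt a)) := by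
      refine Finset.sum_congr rfl (fun a _ => Finset.sum_congr rfl (fun e heUV => ?_))
      rw [hkey a e heUV, mul_add]
    rw [e1]
    have e2 : ∑ a, ∑ e ∈ unitVecs d,
        ((π a * p (repT Md a) e) *
          (Real.log (p (repT Md a) e) - Real.log (p (repT Md a + e) (-e)))
        + (π a * p (repT Md a) e) * (φt (a + projT Md e) - φt a))
        = (∑ a, ∑ e ∈ unitVecs d, (π a * p (repT Md a) e) *
            (Real.log (p (repT Md a) e) - Real.log (p (repT Md a + e) (-e))))
          + ∑ a, ∑ e ∈ unitVecs d, (π a * p (repT Md a) e) * (φt (a + projT Md e) - φt a) := by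
      rw [← Finset.sum_add_distrib]
      exact Finset.sum_congr rfl (fun a _ => by rw [← Finset.sum_add_distrib])
    rw [e2, hT2, add_zero]
    have e3 : ∑ a, ∑ e ∈ unitVecs d, (π a * p (repT Md a) e) *
          (Real.log (p (repT Md a) e) - Real.log (p (repT Md a + e) (-e)))
        = (∑ a, ∑ e ∈ unitVecs d, F (a, e) * (Real.log (F (a, e)) - Real.log (F (σ (a, e)))))
          + ∑ a, ∑ e ∈ unitVecs d,
              (π a * p (repT Md a) e) * (Real.log (π (a + projT Md e)) - Real.log (π a)) := by
      rw [← Finset.sum_add_distrib]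
      refine Finset.sum_congr rfl (fun a _ => ?_)
      rw [← Finset.sum_add_distrib]
      exact Finset.sum_congr rfl (fun e heUV => hlogkey a e heUV)
    rw [e3, hT3, add_zero, ← Finset.sum_product']
  rw [hmain]
  -- Step 6: entropy production is positive unless detailed balance holds
  by_cases hbal : ∀ t ∈ S, F (σ t) = F t
  · -- detailed balance: contradiction with g ≠ 0
    exfalso
    have hbal' : ∀ (x : Fin d → ℤ) (e : Fin d → ℤ), IsUnitVec e →
        π (projT Md (x + e)) * p (x + e) (-e) = π (projT Md x) * p x e := by
      intro x e he
      have ht : ((projT Md x, e) : (Torus d Md) × (Fin d → ℤ)) ∈ S :=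
        (hmemS _).mpr (mem_unitVecs.mpr he)
      have h := hbal _ ht
      show _ = _
      have hFt : F (projT Md x, e) = π (projT Md x) * p x e := by
        show π (projT Md x) * p (repT Md (projT Md x)) e = _
        rw [p_congr henv (projT_repT (projT Md x)) e]
      have hFσ : F (σ (projT Md x, e)) = π (projT Md (x + e)) * p (x + e) (-e) := by
        show π (projT Md x + projT Md e) * p (repT Md (projT Md x + projT Md e)) (-e) = _
        rw [← projT_add, p_congr henv (projT_repT (projT Md (x + e))) (-e)]
      rw [← hFt, ← hFσ, h]
    -- the function u - log π∘projT is invariant under unit steps, hence constant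
    set w : (Fin d → ℤ) → ℝ := fun x => u x + Real.log (π (projT Md x)) with hw
    have hwstep : ∀ x j, w (x + Pi.single j 1) = w x := by
      intro x j
      have he : IsUnitVec (Pi.single j (1:ℤ)) := isUnitVec_single j
      have hb := hbal' x (Pi.single j 1) he
      have hlog := congrArg Real.log hb
      rw [Real.log_mul (hππ _).ne' (hpos _ _ he.neg).ne',
          Real.log_mul (hππ _).ne' (hpos _ _ he).ne'] at hlog
      have hu1 := hu x (Pi.single j 1) he
      rw [Real.log_div (hpos _ _ he).ne' (hpos _ _ he.neg).ne'] at hu1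
      simp only [hw]
      linarith
    have hwconst := const_of_unit_steps w hwstep
    have hproj0 : ∀ i, projT Md (Pi.single i ((Md i : ℤ))) = (0 : Torus d Md) := by
      intro i
      funext j
      by_cases hji : j = i
      · subst hji
        show (((Pi.single j ((Md j : ℤ)) : Fin d → ℤ) j : ℤ) : ZMod (Md j)) = 0
        rw [Pi.single_eq_same]
        push_cast
        exact ZMod.natCast_self (Md j)
      · show (((Pi.single i ((Md i : ℤ)) : Fin d → ℤ) j : ℤ) : ZMod (Md j)) = 0
        rw [Pi.single_eq_of_ne hji]
        simp
    have hprojz : projT Md (0 : Fin d → ℤ) = (0 : Torus d Md) := by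
      funext j; simp [projT]
    have hgz : ∀ i, avgNegGrad Md p i = 0 := by
      intro i
      have h5 := hwconst (Pi.single i ((Md i : ℤ)))
      simp only [hw, hproj0 i, hprojz, hu0] at h5
      have h6 : u (Pi.single i ((Md i : ℤ))) = 0 := by linarith
      have h7 := u_single_M (Md := Md) (p := p) hu0 hu i
      rw [h6] at h7
      have h8 : (Md i : ℝ) * avgNegGrad Md p i = 0 := by linarith
      rcases mul_eq_zero.mp h8 with h | h
      · exact absurd h (MdR_ne_zero i)
      · exact h
    exact hg (funext hgz)
  · -- strict entropy production
    push_neg at hbal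
    obtain ⟨t0, ht0S, ht0⟩ := hbal
    have hzero : ∑ t ∈ S, (F t - F (σ t)) = 0 := by
      rw [Finset.sum_sub_distrib, hFs, sub_self]
    have hlt : ∑ t ∈ S, (F t - F (σ t))
        < ∑ t ∈ S, F t * (Real.log (F t) - Real.log (F (σ t))) := by
      refine Finset.sum_lt_sum
        (fun t ht => entropy_term (hFpos t ht) (hFpos _ (hσmem t ht))) ?_
      exact ⟨t0, ht0S, entropy_term_strict (hFpos t0 ht0S) (hFpos _ (hσmem t0 ht0S))
        (fun h => ht0 h.symm)⟩
    linarith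
end
end
end
end
end
end
end
end
end
end

section
/- Let (p_x)_{x∈Z^d} be a reversible nearest-neighbour periodic environment with p_x(e) > 0 for all x and unit vectors e, with potential u and average negative gradient g. Then for every x ∈ Z^d and every m ∈ M = M_1Z × ⋯ × M_dZ, one has u(x + m) = u(x) − ⟨g, m⟩. In particular, the function x ↦ u(x) + ⟨g, x⟩ is M-periodic (hence bounded). -/
open MeasureTheory Filter Topology ProbabilityTheory

noncomputable section

lemma aux_u_single {d : ℕ} (p : (Fin d → ℤ) → (Fin d → ℤ) → ℝ)
    (u : (Fin d → ℤ) → ℝ) (hu0 : u 0 = 0)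
    (hu : ∀ x e, IsUnitVec e → u x - u (x + e) = Real.log (p x e / p (x + e) (-e)))
    (i : Fin d) (n : ℕ) :
    u (Pi.single i (n : ℤ)) = -∑ j ∈ Finset.range n,
      Real.log (p (Pi.single i (j : ℤ)) (Pi.single i 1) /
        p (Pi.single i ((j : ℤ) + 1)) (-Pi.single i 1)) := by
  induction n with
  | zero => simp [hu0]
  | succ n ih =>
    have he : IsUnitVec (Pi.single i (1:ℤ)) := ⟨i, Or.inl rfl⟩
    have h := hu ((Pi.single i (n:ℤ)) : Fin d → ℤ) ((Pi.single i (1:ℤ)) : Fin d → ℤ) he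
    have hadd : (Pi.single i (n:ℤ) : Fin d → ℤ) + Pi.single i (1:ℤ) = Pi.single i ((n:ℤ)+1) := by
      rw [← Pi.single_add]
    rw [hadd] at h
    rw [Finset.sum_range_succ]
    have : ((n+1 : ℕ) : ℤ) = (n:ℤ)+1 := by push_cast; ring
    rw [this]
    linarith

lemma aux_u_period {d : ℕ} (Md : Fin d → ℕ) (p : (Fin d → ℤ) → (Fin d → ℤ) → ℝ)
    (henv : IsPeriodicEnv Md p)
    (u : (Fin d → ℤ) → ℝ) (hu0 : u 0 = 0)
    (hu : ∀ x e, IsUnitVec e → u x - u (x + e) = Real.log (p x e / p (x + e) (-e)))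
    (i : Fin d) (x : Fin d → ℤ) :
    u (x + Pi.single i (Md i : ℤ)) = u x - ∑ j ∈ Finset.range (Md i),
      Real.log (p (Pi.single i (j : ℤ)) (Pi.single i 1) /
        p (Pi.single i ((j : ℤ) + 1)) (-Pi.single i 1)) := by
  set f : (Fin d → ℤ) → ℝ := fun y => u (y + Pi.single i (Md i : ℤ)) - u y with hf
  have hstep : ∀ (y : Fin d → ℤ) (j : Fin d), f (y + Pi.single j 1) = f y := by
    intro y j
    have he : IsUnitVec (Pi.single j (1:ℤ)) := ⟨j, Or.inl rfl⟩
    have h1 := hu y (Pi.single j (1:ℤ)) he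
    have h2 := hu (y + Pi.single i (Md i : ℤ)) (Pi.single j (1:ℤ)) he
    rw [henv.2.2 y (Pi.single j 1) i] at h2
    have hc : y + Pi.single i (Md i : ℤ) + Pi.single j 1
        = y + Pi.single j 1 + Pi.single i (Md i : ℤ) := by abel
    rw [hc, henv.2.2 (y + Pi.single j 1) (-Pi.single j 1) i] at h2
    simp only [hf]
    linarith
  have hstepk : ∀ (y : Fin d → ℤ) (j : Fin d) (k : ℤ), f (y + Pi.single j k) = f y := by
    intro y j k
    induction k using Int.induction_on with
    | zero => simp
    | succ n ih =>
      have h : (Pi.single j ((n:ℤ)+1) : Fin d → ℤ) = Pi.single j (n:ℤ) + Pi.single j 1 := by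
        rw [← Pi.single_add]
      rw [h, ← add_assoc, hstep, ih]
    | pred n ih =>
      have h := hstep (y + Pi.single j (-(n:ℤ)-1)) j
      have hc : y + Pi.single j (-(n:ℤ)-1) + Pi.single j 1 = y + Pi.single j (-(n:ℤ)) := by
        rw [add_assoc, ← Pi.single_add]; ring_nf
      rw [hc] at h
      rw [← h]
      exact ih
  have hconst : ∀ y : Fin d → ℤ, f y = f 0 := by
    intro y
    have key : ∀ s : Finset (Fin d), f (∑ j ∈ s, Pi.single j (y j)) = f 0 := by
      intro s
      induction s using Finset.induction_on with
      | empty => simp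
      | @insert a s ha ih =>
        rw [Finset.sum_insert ha, add_comm, hstepk, ih]
    have := key Finset.univ
    rwa [Finset.univ_sum_single] at this
  have h0 : f 0 = -∑ j ∈ Finset.range (Md i),
      Real.log (p (Pi.single i (j : ℤ)) (Pi.single i 1) /
        p (Pi.single i ((j : ℤ) + 1)) (-Pi.single i 1)) := by
    simp only [hf, zero_add, hu0, sub_zero]
    exact aux_u_single p u hu0 hu i (Md i)
  have := hconst x
  rw [h0] at this
  simp only [hf] at this
  linarith

lemma aux_u_period_mul {d : ℕ} (Md : Fin d → ℕ) (p : (Fin d → ℤ) → (Fin d → ℤ) → ℝ)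
    (henv : IsPeriodicEnv Md p)
    (u : (Fin d → ℤ) → ℝ) (hu0 : u 0 = 0)
    (hu : ∀ x e, IsUnitVec e → u x - u (x + e) = Real.log (p x e / p (x + e) (-e)))
    (i : Fin d) (x : Fin d → ℤ) (k : ℤ) :
    u (x + Pi.single i (k * (Md i : ℤ))) = u x - (k : ℝ) * ∑ j ∈ Finset.range (Md i),
      Real.log (p (Pi.single i (j : ℤ)) (Pi.single i 1) /
        p (Pi.single i ((j : ℤ) + 1)) (-Pi.single i 1)) := by
  induction k using Int.induction_on with
  | zero => simp
  | succ n ih =>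
    have h : (Pi.single i (((n:ℤ)+1) * (Md i : ℤ)) : Fin d → ℤ)
        = Pi.single i ((n:ℤ) * (Md i : ℤ)) + Pi.single i (Md i : ℤ) := by
      rw [← Pi.single_add]; ring_nf
    rw [h, ← add_assoc, aux_u_period Md p henv u hu0 hu i _, ih]
    push_cast; ring
  | pred n ih =>
    have h := aux_u_period Md p henv u hu0 hu i (x + Pi.single i ((-(n:ℤ)-1) * (Md i : ℤ)))
    have hc : x + Pi.single i ((-(n:ℤ)-1) * (Md i : ℤ)) + Pi.single i (Md i : ℤ)
        = x + Pi.single i ((-(n:ℤ)) * (Md i : ℤ)) := by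
      rw [add_assoc, ← Pi.single_add]; ring_nf
    rw [hc, ih] at h
    push_cast at h ⊢
    linarith

/-- **Linear growth of the potential along the period lattice.** For a reversible
nearest-neighbour periodic environment with potential `u` and average negative
gradient `g`: `u(x + m) = u(x) - ⟨g, m⟩` for every `x ∈ ℤ^d` and every `m` in the
period lattice `M = M₁ℤ × ⋯ × M_dℤ`; in particular the function
`x ↦ u(x) + ⟨g, x⟩` is `M`-periodic. -/
theorem potential_periodic_part (d : ℕ) (hd : 0 < d) (Md : Fin d → ℕ)
    [∀ i, NeZero (Md i)]
    (p : (Fin d → ℤ) → (Fin d → ℤ) → ℝ) (henv : IsPeriodicEnv Md p)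
    (hnn : IsNearestNeighbour p) (hpos : ∀ x e, IsUnitVec e → 0 < p x e)
    (u : (Fin d → ℤ) → ℝ) (hu0 : u 0 = 0)
    (hu : ∀ x e, IsUnitVec e → u x - u (x + e) = Real.log (p x e / p (x + e) (-e))) :
    (∀ x m : Fin d → ℤ, (∀ i, (Md i : ℤ) ∣ m i) →
      u (x + m) = u x - ∑ i, avgNegGrad Md p i * (m i : ℝ)) ∧
    (∀ x m : Fin d → ℤ, (∀ i, (Md i : ℤ) ∣ m i) →
      u (x + m) + ∑ i, avgNegGrad Md p i * ((x + m) i : ℝ) =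
        u x + ∑ i, avgNegGrad Md p i * (x i : ℝ)) := by
  have main : ∀ x m : Fin d → ℤ, (∀ i, (Md i : ℤ) ∣ m i) →
      u (x + m) = u x - ∑ i, avgNegGrad Md p i * (m i : ℝ) := by
    intro x m hm
    have hsingle : ∀ (y : Fin d → ℤ) (i : Fin d),
        u (y + Pi.single i (m i)) = u y - avgNegGrad Md p i * (m i : ℝ) := by
      intro y i
      obtain ⟨k, hk⟩ := hm i
      have h := aux_u_period_mul Md p henv u hu0 hu i y k
      rw [show k * (Md i : ℤ) = m i by rw [hk]; ring] at h
      rw [h, avgNegGrad]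
      have hMd : (Md i : ℝ) ≠ 0 := Nat.cast_ne_zero.mpr (NeZero.ne _)
      rw [hk]
      push_cast
      field_simp
    have key : ∀ s : Finset (Fin d),
        u (x + ∑ i ∈ s, Pi.single i (m i)) = u x - ∑ i ∈ s, avgNegGrad Md p i * (m i : ℝ) := by
      intro s
      induction s using Finset.induction_on with
      | empty => simp
      | @insert a s ha ih =>
        rw [Finset.sum_insert ha, Finset.sum_insert ha, show
          x + (Pi.single a (m a) + ∑ i ∈ s, Pi.single i (m i))
            = (x + ∑ i ∈ s, Pi.single i (m i)) + Pi.single a (m a) by abel,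
          hsingle, ih]
        ring
    have := key Finset.univ
    rwa [Finset.univ_sum_single] at this
  refine ⟨main, fun x m hm => ?_⟩
  rw [main x m hm]
  have : ∀ i, ((x + m) i : ℝ) = (x i : ℝ) + (m i : ℝ) := by
    intro i; push_cast [Pi.add_apply]; ring
  simp only [this, mul_add, Finset.sum_add_distrib]
  ring
end
end
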